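/- If the triple (H(1), ρ, δ̄) satisfies axiom A4 (the limit β̄(x, y) = lim_{ε→0⁺} δ̄_{ε⁻¹}(δ̄_ε(x)·δ̄_ε(y)) exists, uniformly for x, y in compact sets), then it also satisfies axiom A3: the limit lim_{ε→0⁺} (1/ε)·ρ(δ̄^u_ε(x), δ̄^u_ε(y)) exists uniformly for u, x, y in compact sets. -/

import Mathlib

/-- The Heisenberg group H(1) as a set: ℝ² × ℝ. -/
abbrev H : Type := (ℝ × ℝ) × ℝ

/-- Euclidean norm on ℝ². -/
noncomputable def enorm2 (x : ℝ × ℝ) : ℝ := Real.sqrt (x.1 ^ 2 + x.2 ^ 2)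

/-- Canonical symplectic form on ℝ². -/
def omega2 (x y : ℝ × ℝ) : ℝ := x.1 * y.2 - x.2 * y.1

/-- Heisenberg group operation. -/
def Hmul (p q : H) : H :=
  ((p.1.1 + q.1.1, p.1.2 + q.1.2), p.2 + q.2 + 2 * omega2 p.1 q.1)

/-- Heisenberg group inverse. -/
def Hinv (p : H) : H := ((-p.1.1, -p.1.2), -p.2)

/-- Neutral element. -/
def He : H := ((0, 0), 0)

/-- The gauge d₀(x,x̄) = max {‖x‖, √|x̄|}. -/
noncomputable def d0 (p : H) : ℝ := max (enorm2 p.1) (Real.sqrt |p.2|)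
/-- The function G(t) = k(t) + t², whose inverse is g. -/
def Ginv (k : ℝ → ℝ) (t : ℝ) : ℝ := k t + t ^ 2

/-- The gauge ρ₀(x,x̄) = max {‖x‖, g(|x̄|)}. -/
noncomputable def rho0 (g : ℝ → ℝ) (p : H) : ℝ := max (enorm2 p.1) (g |p.2|)

/-- The dilatations δ̄_ε(x,x̄) = (εx, sgn(x̄)·g⁻¹(ε·g(|x̄|))). -/
noncomputable def bdil (k g : ℝ → ℝ) (ε : ℝ) (p : H) : H :=
  ((ε * p.1.1, ε * p.1.2), Real.sign p.2 * Ginv k (ε * g |p.2|))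

/-- The usual anisotropic dilations δ_ε(x,x̄) = (εx, ε²x̄). -/
def hdil (ε : ℝ) (p : H) : H := ((ε * p.1.1, ε * p.1.2), ε ^ 2 * p.2)

-- auxiliary lemmas
lemma abs_sign_of_ne {x : ℝ} (h : x ≠ 0) : |Real.sign x| = 1 := by
  rcases h.lt_or_gt with h|h
  · rw [Real.sign_of_neg h]; norm_num
  · rw [Real.sign_of_pos h]; norm_num

lemma abs_sign_le (x : ℝ) : |Real.sign x| ≤ 1 := by
  rcases eq_or_ne x 0 with h|h
  · simp [h, Real.sign_zero]
  · rw [abs_sign_of_ne h]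

lemma sign_mul_abs' (x : ℝ) : Real.sign x * |x| = x := by
  rcases lt_trichotomy x 0 with h|h|h
  · rw [Real.sign_of_neg h, abs_of_neg h]; ring
  · simp [h]
  · rw [Real.sign_of_pos h, abs_of_pos h]; ring

lemma enorm2_nonneg (p : ℝ × ℝ) : 0 ≤ enorm2 p := Real.sqrt_nonneg _

lemma enorm2_scale {ε : ℝ} (hε : 0 ≤ ε) (a b : ℝ) :
    enorm2 (ε * a, ε * b) = ε * enorm2 (a, b) := by
  unfold enorm2
  rw [show (ε*a)^2 + (ε*b)^2 = ε^2 * (a^2+b^2) by ring,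
    Real.sqrt_mul (sq_nonneg ε), Real.sqrt_sq hε]

lemma enorm2_le_add (p q : ℝ × ℝ) :
    enorm2 p ≤ enorm2 q + (|p.1 - q.1| + |p.2 - q.2|) := by
  unfold enorm2
  have hq : (0:ℝ) ≤ q.1^2 + q.2^2 := by positivity
  have h1 : |q.1| ≤ Real.sqrt (q.1^2 + q.2^2) := by
    rw [← Real.sqrt_sq_eq_abs]; exact Real.sqrt_le_sqrt (by nlinarith [sq_nonneg q.2])
  have h2 : |q.2| ≤ Real.sqrt (q.1^2 + q.2^2) := by
    rw [← Real.sqrt_sq_eq_abs]; exact Real.sqrt_le_sqrt (by nlinarith [sq_nonneg q.1])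
  have hs := Real.sqrt_nonneg (q.1^2 + q.2^2)
  have e1 : q.1 * (p.1 - q.1) ≤ |q.1| * |p.1 - q.1| := by
    calc q.1 * (p.1 - q.1) ≤ |q.1 * (p.1 - q.1)| := le_abs_self _
    _ = |q.1| * |p.1 - q.1| := abs_mul _ _
  have e2 : q.2 * (p.2 - q.2) ≤ |q.2| * |p.2 - q.2| := by
    calc q.2 * (p.2 - q.2) ≤ |q.2 * (p.2 - q.2)| := le_abs_self _
    _ = |q.2| * |p.2 - q.2| := abs_mul _ _
  have key : p.1^2 + p.2^2 ≤
      (Real.sqrt (q.1^2 + q.2^2) + (|p.1 - q.1| + |p.2 - q.2|))^2 := by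
    nlinarith [Real.sq_sqrt hq, abs_nonneg (p.1 - q.1), abs_nonneg (p.2 - q.2),
      mul_le_mul_of_nonneg_right h1 (abs_nonneg (p.1 - q.1)),
      mul_le_mul_of_nonneg_right h2 (abs_nonneg (p.2 - q.2)),
      sq_abs (p.1 - q.1), sq_abs (p.2 - q.2),
      mul_nonneg (abs_nonneg (p.1 - q.1)) (abs_nonneg (p.2 - q.2)), e1, e2]
  calc Real.sqrt (p.1^2 + p.2^2)
      ≤ Real.sqrt ((Real.sqrt (q.1^2 + q.2^2) + (|p.1 - q.1| + |p.2 - q.2|))^2) :=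
        Real.sqrt_le_sqrt key
    _ = _ := Real.sqrt_sq (by positivity)

lemma enorm2_sub_le (p q : ℝ × ℝ) :
    |enorm2 p - enorm2 q| ≤ |p.1 - q.1| + |p.2 - q.2| := by
  rw [abs_sub_le_iff]
  constructor
  · linarith [enorm2_le_add p q]
  · have h := enorm2_le_add q p
    have c1 : |q.1 - p.1| = |p.1 - q.1| := abs_sub_comm _ _
    have c2 : |q.2 - p.2| = |p.2 - q.2| := abs_sub_comm _ _
    linarith

lemma Hmul_cancel (u p q : H) :
    Hmul (Hinv (Hmul u p)) (Hmul u q) = Hmul (Hinv p) q := by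
  simp only [Hmul, Hinv, omega2, Prod.mk.injEq]
  refine ⟨⟨by ring, by ring⟩, by ring⟩

lemma Hinv_bdil (k g : ℝ → ℝ) (ε : ℝ) (p : H) :
    Hinv (bdil k g ε p) = bdil k g ε (Hinv p) := by
  simp only [Hinv, bdil, abs_neg, Real.sign_neg, Prod.mk.injEq]
  refine ⟨⟨by ring, by ring⟩, by ring⟩

section Glemmas
variable {k g : ℝ → ℝ}

lemma Ginv_nonneg (hk_nonneg : ∀ t ∈ Set.Ici (0:ℝ), 0 ≤ k t) {s : ℝ} (hs : 0 ≤ s) :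
    0 ≤ Ginv k s := add_nonneg (hk_nonneg s hs) (by positivity)

lemma Ginv_mono (hk_mono : StrictMonoOn k (Set.Ici 0)) :
    MonotoneOn (Ginv k) (Set.Ici 0) := fun s hs t ht hst =>
  add_le_add (hk_mono.monotoneOn hs ht hst) (pow_le_pow_left₀ hs hst 2)

lemma Ginv_strict (hk_mono : StrictMonoOn k (Set.Ici 0)) :
    StrictMonoOn (Ginv k) (Set.Ici 0) := fun s hs t ht hst =>
  add_lt_add_of_lt_of_le (hk_mono hs ht hst) (pow_le_pow_left₀ hs hst.le 2)

lemma g_zero (hk0 : k 0 = 0) (hg_left : ∀ s ∈ Set.Ici (0:ℝ), g (Ginv k s) = s) :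
    g 0 = 0 := by
  have h := hg_left 0 (Set.mem_Ici.2 le_rfl)
  simpa [Ginv, hk0] using h

lemma g_mono (hk_mono : StrictMonoOn k (Set.Ici 0))
    (hg_right : ∀ t ∈ Set.Ici (0:ℝ), 0 ≤ g t ∧ Ginv k (g t) = t) :
    MonotoneOn g (Set.Ici 0) := by
  intro s hs t ht hst
  by_contra hcon
  push_neg at hcon
  have h1 := hg_right s hs
  have h2 := hg_right t ht
  have := Ginv_strict hk_mono (Set.mem_Ici.2 h2.1) (Set.mem_Ici.2 h1.1) hcon
  rw [h1.2, h2.2] at this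
  exact absurd hst (not_le.2 this)

lemma g_pos (hk0 : k 0 = 0) (hk_mono : StrictMonoOn k (Set.Ici 0))
    (hg_right : ∀ t ∈ Set.Ici (0:ℝ), 0 ≤ g t ∧ Ginv k (g t) = t)
    {t : ℝ} (ht : 0 < t) : 0 < g t := by
  rcases (hg_right t ht.le).1.lt_or_eq with h|h
  · exact h
  · exfalso
    have h2 := (hg_right t ht.le).2
    rw [← h, Ginv, hk0] at h2
    norm_num at h2
    exact absurd h2 ht.ne

lemma g_contOn (hk0 : k 0 = 0)
    (hk_mono : StrictMonoOn k (Set.Ici 0))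
    (hk_nonneg : ∀ t ∈ Set.Ici (0:ℝ), 0 ≤ k t)
    (hg_left : ∀ s ∈ Set.Ici (0:ℝ), g (Ginv k s) = s)
    (hg_right : ∀ t ∈ Set.Ici (0:ℝ), 0 ≤ g t ∧ Ginv k (g t) = t) :
    ContinuousOn g (Set.Ici 0) := by
  set G : ℝ → ℝ := fun t => if 0 ≤ t then g t else t with hG
  have hmono : Monotone G := by
    intro s t hst
    by_cases hs : 0 ≤ s <;> by_cases ht : 0 ≤ t
    · simpa [G, hs, ht] using g_mono hk_mono hg_right hs ht hst
    · exact absurd (hs.trans hst) ht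
    · simp only [G, if_neg hs, if_pos ht]
      have : s < 0 := not_le.1 hs
      exact le_trans this.le (hg_right t ht).1
    · simpa [G, hs, ht] using hst
  have hsurj : Function.Surjective G := by
    intro y
    by_cases hy : 0 ≤ y
    · exact ⟨Ginv k y, by simp [G, if_pos (Ginv_nonneg hk_nonneg hy), hg_left y hy]⟩
    · exact ⟨y, by simp [G, hy]⟩
  have hc : Continuous G := hmono.continuous_of_surjective hsurj
  exact hc.continuousOn.congr (fun t ht => (if_pos (Set.mem_Ici.1 ht)).symm)

lemma rho0_bdil (hk0 : k 0 = 0)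
    (hk_nonneg : ∀ t ∈ Set.Ici (0:ℝ), 0 ≤ k t)
    (hg_left : ∀ s ∈ Set.Ici (0:ℝ), g (Ginv k s) = s)
    (hg_right : ∀ t ∈ Set.Ici (0:ℝ), 0 ≤ g t ∧ Ginv k (g t) = t)
    {ε : ℝ} (hε : 0 ≤ ε) (p : H) :
    rho0 g (bdil k g ε p) = ε * rho0 g p := by
  unfold rho0 bdil
  simp only
  rw [show ((ε * p.1.1, ε * p.1.2) : ℝ × ℝ) = (ε * p.1.1, ε * p.1.2) from rfl,
    enorm2_scale hε]
  rcases eq_or_ne p.2 0 with h|h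
  · simp only [h, Real.sign_zero, zero_mul, abs_zero, g_zero hk0 hg_left]
    rw [max_eq_left (mul_nonneg hε (enorm2_nonneg p.1)),
      max_eq_left (enorm2_nonneg p.1)]
  · have hgn : 0 ≤ g |p.2| := (hg_right _ (Set.mem_Ici.2 (abs_nonneg _))).1
    have habs : |Real.sign p.2 * Ginv k (ε * g |p.2|)| = Ginv k (ε * g |p.2|) := by
      rw [abs_mul, abs_sign_of_ne h, one_mul,
        abs_of_nonneg (Ginv_nonneg hk_nonneg (mul_nonneg hε hgn))]
    rw [habs, hg_left _ (mul_nonneg hε hgn), mul_max_of_nonneg _ _ hε]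

lemma bdil_bdil_inv (hk0 : k 0 = 0)
    (hk_mono : StrictMonoOn k (Set.Ici 0))
    (hk_nonneg : ∀ t ∈ Set.Ici (0:ℝ), 0 ≤ k t)
    (hg_left : ∀ s ∈ Set.Ici (0:ℝ), g (Ginv k s) = s)
    (hg_right : ∀ t ∈ Set.Ici (0:ℝ), 0 ≤ g t ∧ Ginv k (g t) = t)
    {ε : ℝ} (hε : 0 < ε) (p : H) :
    bdil k g ε (bdil k g ε⁻¹ p) = p := by
  have hx1 : ε * (ε⁻¹ * p.1.1) = p.1.1 := by field_simp
  have hx2 : ε * (ε⁻¹ * p.1.2) = p.1.2 := by field_simp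
  rcases eq_or_ne p.2 0 with h|h
  · simp only [bdil, h, Real.sign_zero, zero_mul, abs_zero, g_zero hk0 hg_left,
      mul_zero, hx1, hx2]
    simp [Prod.ext_iff, h]
  · have hgpos : 0 < g |p.2| := g_pos hk0 hk_mono hg_right (abs_pos.2 h)
    have hspos : 0 < ε⁻¹ * g |p.2| := mul_pos (inv_pos.2 hε) hgpos
    have hGpos : 0 < Ginv k (ε⁻¹ * g |p.2|) := by
      have hk' : 0 ≤ k (ε⁻¹ * g |p.2|) := hk_nonneg _ hspos.le
      have : 0 < (ε⁻¹ * g |p.2|)^2 := pow_pos hspos 2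
      unfold Ginv; linarith
    have hsgn : Real.sign (Real.sign p.2 * Ginv k (ε⁻¹ * g |p.2|)) = Real.sign p.2 := by
      rcases h.lt_or_gt with hneg|hpos
      · rw [Real.sign_of_neg hneg, Real.sign_of_neg (by nlinarith)]
      · rw [Real.sign_of_pos hpos, one_mul, Real.sign_of_pos hGpos]
    have habs : |Real.sign p.2 * Ginv k (ε⁻¹ * g |p.2|)| = Ginv k (ε⁻¹ * g |p.2|) := by
      rw [abs_mul, abs_sign_of_ne h, one_mul, abs_of_pos hGpos]
    simp only [bdil, hx1, hx2]
    rw [hsgn, habs, hg_left _ hspos.le,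
      show ε * (ε⁻¹ * g |p.2|) = g |p.2| by field_simp,
      (hg_right |p.2| (Set.mem_Ici.2 (abs_nonneg _))).2, sign_mul_abs']

end Glemmas

lemma omega_bound {x1 x2 y1 y2 M : ℝ} (hM : 0 ≤ M) (h1 : |x1| ≤ M) (h2 : |x2| ≤ M)
    (h3 : |y1| ≤ M) (h4 : |y2| ≤ M) : |x1*y2 - x2*y1| ≤ 2*M^2 := by
  have e : |x1*y2 - x2*y1| ≤ |x1*y2| + |x2*y1| := by
    calc |x1*y2 - x2*y1| = |x1*y2 + -(x2*y1)| := by ring_nf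
    _ ≤ |x1*y2| + |-(x2*y1)| := abs_add_le _ _
    _ = |x1*y2| + |x2*y1| := by rw [abs_neg]
  rw [abs_mul, abs_mul] at e
  nlinarith [abs_nonneg x1, abs_nonneg x2, abs_nonneg y1, abs_nonneg y2,
    mul_le_mul h1 h4 (abs_nonneg y2) hM, mul_le_mul h2 h3 (abs_nonneg y1) hM]

lemma sign_mul_le {x G : ℝ} (hG : 0 ≤ G) : |Real.sign x * G| ≤ G := by
  rw [abs_mul, abs_of_nonneg hG]
  nlinarith [abs_sign_le x, abs_nonneg (Real.sign x)]

section Wbound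
variable {k g : ℝ → ℝ}

lemma W_norm_bound (hk_mono : StrictMonoOn k (Set.Ici 0))
    (hk_nonneg : ∀ t ∈ Set.Ici (0:ℝ), 0 ≤ k t)
    (hg_right : ∀ t ∈ Set.Ici (0:ℝ), 0 ≤ g t ∧ Ginv k (g t) = t)
    {ε M : ℝ} (hε : 0 < ε) (hM : 0 ≤ M)
    {a b : H} (ha : ‖a‖ ≤ M) (hb : ‖b‖ ≤ M) :
    ‖bdil k g ε⁻¹ (Hmul (bdil k g ε a) (bdil k g ε b))‖ ≤
      max (2*M) (Ginv k (ε⁻¹ * g (2 * Ginv k (ε * g M) + 4 * ε^2 * M^2))) := by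
  have ha11 : |a.1.1| ≤ M := le_trans (le_trans (norm_fst_le a.1) (norm_fst_le a)) ha
  have ha12 : |a.1.2| ≤ M := le_trans (le_trans (norm_snd_le a.1) (norm_fst_le a)) ha
  have ha2 : |a.2| ≤ M := le_trans (norm_snd_le a) ha
  have hb11 : |b.1.1| ≤ M := le_trans (le_trans (norm_fst_le b.1) (norm_fst_le b)) hb
  have hb12 : |b.1.2| ≤ M := le_trans (le_trans (norm_snd_le b.1) (norm_fst_le b)) hb
  have hb2 : |b.2| ≤ M := le_trans (norm_snd_le b) hb
  have hgM : 0 ≤ g M := (hg_right M (Set.mem_Ici.2 hM)).1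
  have hga : g |a.2| ≤ g M :=
    g_mono hk_mono hg_right (Set.mem_Ici.2 (abs_nonneg _)) (Set.mem_Ici.2 hM) ha2
  have hgb : g |b.2| ≤ g M :=
    g_mono hk_mono hg_right (Set.mem_Ici.2 (abs_nonneg _)) (Set.mem_Ici.2 hM) hb2
  have hga0 : 0 ≤ g |a.2| := (hg_right _ (Set.mem_Ici.2 (abs_nonneg _))).1
  have hgb0 : 0 ≤ g |b.2| := (hg_right _ (Set.mem_Ici.2 (abs_nonneg _))).1
  have hGa : Ginv k (ε * g |a.2|) ≤ Ginv k (ε * g M) :=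
    Ginv_mono hk_mono (Set.mem_Ici.2 (by positivity)) (Set.mem_Ici.2 (by positivity))
      (mul_le_mul_of_nonneg_left hga hε.le)
  have hGb : Ginv k (ε * g |b.2|) ≤ Ginv k (ε * g M) :=
    Ginv_mono hk_mono (Set.mem_Ici.2 (by positivity)) (Set.mem_Ici.2 (by positivity))
      (mul_le_mul_of_nonneg_left hgb hε.le)
  have hGa0 : 0 ≤ Ginv k (ε * g |a.2|) := Ginv_nonneg hk_nonneg (by positivity)
  have hGb0 : 0 ≤ Ginv k (ε * g |b.2|) := Ginv_nonneg hk_nonneg (by positivity)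
  set z : ℝ := Real.sign a.2 * Ginv k (ε * g |a.2|) + Real.sign b.2 * Ginv k (ε * g |b.2|)
      + 2 * omega2 (ε * a.1.1, ε * a.1.2) (ε * b.1.1, ε * b.1.2) with hz
  set D : ℝ := 2 * Ginv k (ε * g M) + 4 * ε^2 * M^2 with hD
  have hzD : |z| ≤ D := by
    have hω : |omega2 (ε * a.1.1, ε * a.1.2) (ε * b.1.1, ε * b.1.2)| ≤ 2*(ε*M)^2 := by
      have h1 : |ε * a.1.1| ≤ ε * M := by
        rw [abs_mul, abs_of_pos hε]; exact mul_le_mul_of_nonneg_left ha11 hε.le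
      have h2 : |ε * a.1.2| ≤ ε * M := by
        rw [abs_mul, abs_of_pos hε]; exact mul_le_mul_of_nonneg_left ha12 hε.le
      have h3 : |ε * b.1.1| ≤ ε * M := by
        rw [abs_mul, abs_of_pos hε]; exact mul_le_mul_of_nonneg_left hb11 hε.le
      have h4 : |ε * b.1.2| ≤ ε * M := by
        rw [abs_mul, abs_of_pos hε]; exact mul_le_mul_of_nonneg_left hb12 hε.le
      exact omega_bound (by positivity) h1 h2 h3 h4
    have e1 : |Real.sign a.2 * Ginv k (ε * g |a.2|)| ≤ Ginv k (ε * g M) :=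
      le_trans (sign_mul_le hGa0) hGa
    have e2 : |Real.sign b.2 * Ginv k (ε * g |b.2|)| ≤ Ginv k (ε * g M) :=
      le_trans (sign_mul_le hGb0) hGb
    calc |z| ≤ |Real.sign a.2 * Ginv k (ε * g |a.2|) + Real.sign b.2 * Ginv k (ε * g |b.2|)|
        + |2 * omega2 (ε * a.1.1, ε * a.1.2) (ε * b.1.1, ε * b.1.2)| := abs_add_le _ _
    _ ≤ (|Real.sign a.2 * Ginv k (ε * g |a.2|)| + |Real.sign b.2 * Ginv k (ε * g |b.2|)|)
        + 2 * |omega2 (ε * a.1.1, ε * a.1.2) (ε * b.1.1, ε * b.1.2)| := by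
          rw [abs_mul]
          gcongr
          · exact abs_add_le _ _
          · rw [show |(2:ℝ)| = 2 by norm_num]
    _ ≤ D := by rw [hD]; nlinarith [hω, e1, e2]
  have hD0 : 0 ≤ D := by
    have := Ginv_nonneg (k := k) hk_nonneg (show (0:ℝ) ≤ ε * g M by positivity)
    rw [hD]; nlinarith
  have hgz : g |z| ≤ g D :=
    g_mono hk_mono hg_right (Set.mem_Ici.2 (abs_nonneg _)) (Set.mem_Ici.2 hD0) hzD
  have hgz0 : 0 ≤ g |z| := (hg_right _ (Set.mem_Ici.2 (abs_nonneg _))).1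
  have hgD0 : 0 ≤ g D := (hg_right _ (Set.mem_Ici.2 hD0)).1
  have hGz : Ginv k (ε⁻¹ * g |z|) ≤ Ginv k (ε⁻¹ * g D) :=
    Ginv_mono hk_mono (Set.mem_Ici.2 (mul_nonneg (inv_pos.2 hε).le hgz0))
      (Set.mem_Ici.2 (mul_nonneg (inv_pos.2 hε).le hgD0))
      (mul_le_mul_of_nonneg_left hgz (inv_pos.2 hε).le)
  have hGz0 : 0 ≤ Ginv k (ε⁻¹ * g |z|) :=
    Ginv_nonneg hk_nonneg (mul_nonneg (inv_pos.2 hε).le hgz0)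
  have hc1 : |ε⁻¹ * (ε * a.1.1 + ε * b.1.1)| ≤ 2 * M := by
    rw [show ε⁻¹ * (ε * a.1.1 + ε * b.1.1) = a.1.1 + b.1.1 by field_simp]
    calc |a.1.1 + b.1.1| ≤ |a.1.1| + |b.1.1| := abs_add_le _ _
    _ ≤ 2 * M := by linarith
  have hc2 : |ε⁻¹ * (ε * a.1.2 + ε * b.1.2)| ≤ 2 * M := by
    rw [show ε⁻¹ * (ε * a.1.2 + ε * b.1.2) = a.1.2 + b.1.2 by field_simp]
    calc |a.1.2 + b.1.2| ≤ |a.1.2| + |b.1.2| := abs_add_le _ _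
    _ ≤ 2 * M := by linarith
  have hc3 : |Real.sign z * Ginv k (ε⁻¹ * g |z|)| ≤ Ginv k (ε⁻¹ * g D) :=
    le_trans (sign_mul_le hGz0) hGz
  show ‖bdil k g ε⁻¹ (Hmul (bdil k g ε a) (bdil k g ε b))‖ ≤ _
  simp only [bdil, Hmul]
  rw [Prod.norm_def, Prod.norm_def]
  simp only [Real.norm_eq_abs]
  refine max_le (max_le ?_ ?_) ?_
  · exact le_trans hc1 (le_max_left _ _)
  · exact le_trans hc2 (le_max_left _ _)
  · exact le_trans hc3 (le_max_right _ _)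
end Wbound

/-- for (H(1),ρ,δ̄), axiom A4 (uniform convergence on compacts of
β̄_ε(x,y) = δ̄_{ε⁻¹}(δ̄_ε(x)·δ̄_ε(y))) implies axiom A3 (uniform convergence on
compacts of (1/ε)·ρ(δ̄^u_ε x, δ̄^u_ε y)). -/
theorem A4_implies_A3
(k g : ℝ → ℝ)
    (hk_conv : ConvexOn ℝ (Set.Ici 0) k)
    (hk_mono : StrictMonoOn k (Set.Ici 0))
    (hk_cont : ContinuousOn k (Set.Ici 0))
    (hk0 : k 0 = 0)
    (hk_nonneg : ∀ t ∈ Set.Ici (0:ℝ), 0 ≤ k t)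
    (hg_left : ∀ s ∈ Set.Ici (0:ℝ), g (Ginv k s) = s)
    (hg_right : ∀ t ∈ Set.Ici (0:ℝ), 0 ≤ g t ∧ Ginv k (g t) = t)
    (β : H → H → H)
    (hA4 : ∀ K : Set H, IsCompact K → ∀ η : ℝ, 0 < η → ∃ ε₀ : ℝ, 0 < ε₀ ∧
      ∀ ε : ℝ, 0 < ε → ε < ε₀ → ∀ x ∈ K, ∀ y ∈ K,
        ‖bdil k g ε⁻¹ (Hmul (bdil k g ε x) (bdil k g ε y)) - β x y‖ < η) :
    ∃ L : H → H → H → ℝ, ∀ K : Set H, IsCompact K → ∀ η : ℝ, 0 < η →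
      ∃ ε₀ : ℝ, 0 < ε₀ ∧ ∀ ε : ℝ, 0 < ε → ε < ε₀ → ∀ u ∈ K, ∀ x ∈ K, ∀ y ∈ K,
        |(1 / ε) * rho0 g (Hmul
            (Hinv (Hmul u (bdil k g ε (Hmul (Hinv u) x))))
            (Hmul u (bdil k g ε (Hmul (Hinv u) y)))) - L u x y| < η := by
  classical
  set L0 : H → H → H → ℝ :=
    fun u x y => rho0 g (β (Hinv (Hmul (Hinv u) x)) (Hmul (Hinv u) y)) with hL0
  refine ⟨L0, ?_⟩
  intro K hK η hη
  rcases K.eq_empty_or_nonempty with hKe | hKne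
  · refine ⟨1, one_pos, ?_⟩
    intro ε hε hε' u hu
    rw [hKe] at hu
    exact absurd hu (Set.notMem_empty u)
  have cont1 : Continuous (fun p : H × H => Hinv (Hmul (Hinv p.1) p.2)) := by
    unfold Hinv Hmul omega2; fun_prop
  have cont2 : Continuous (fun p : H × H => Hmul (Hinv p.1) p.2) := by
    unfold Hinv Hmul omega2; fun_prop
  set K' : Set H := ((fun p : H × H => Hinv (Hmul (Hinv p.1) p.2)) '' (K ×ˢ K)) ∪
      ((fun p : H × H => Hmul (Hinv p.1) p.2) '' (K ×ˢ K)) with hK'def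
  have hK' : IsCompact K' :=
    ((hK.prod hK).image cont1).union ((hK.prod hK).image cont2)
  have hK'ne : K'.Nonempty := by
    obtain ⟨u, hu⟩ := hKne
    exact ⟨_, Or.inl ⟨(u, u), Set.mk_mem_prod hu hu, rfl⟩⟩
  obtain ⟨M, hM⟩ := hK'.isBounded.exists_norm_le
  have hM0 : 0 ≤ M := le_trans (norm_nonneg _) (hM _ hK'ne.choose_spec)
  -- uniform bound on β over K'
  obtain ⟨ε₁, hε₁, hA1⟩ := hA4 K' hK' 1 one_pos
  set εb : ℝ := ε₁ / 2 with hεb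
  have hεbpos : 0 < εb := by rw [hεb]; positivity
  set CW : ℝ := max (2*M) (Ginv k (εb⁻¹ * g (2 * Ginv k (εb * g M) + 4 * εb^2 * M^2)))
    with hCW
  set C : ℝ := CW + 1 with hC
  have hβ : ∀ a ∈ K', ∀ b ∈ K', ‖β a b‖ ≤ C := by
    intro a haK b hbK
    have h1 := hA1 εb hεbpos (by rw [hεb]; linarith) a haK b hbK
    have h2 := W_norm_bound hk_mono hk_nonneg hg_right hεbpos hM0 (hM a haK) (hM b hbK)
    have h3 : ‖β a b‖ ≤ ‖bdil k g εb⁻¹ (Hmul (bdil k g εb a) (bdil k g εb b))‖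
        + ‖bdil k g εb⁻¹ (Hmul (bdil k g εb a) (bdil k g εb b)) - β a b‖ := by
      have := norm_sub_le (bdil k g εb⁻¹ (Hmul (bdil k g εb a) (bdil k g εb b)))
        (bdil k g εb⁻¹ (Hmul (bdil k g εb a) (bdil k g εb b)) - β a b)
      simpa using this
    rw [hC, hCW]
    calc ‖β a b‖ ≤ _ + _ := h3
    _ ≤ CW + 1 := add_le_add h2 h1.le
    _ = _ := by rw [hCW]
  set R : ℝ := C + 1 with hR
  -- uniform continuity of g on [0, R]
  have hgc : ContinuousOn g (Set.Icc 0 R) :=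
    (g_contOn hk0 hk_mono hk_nonneg hg_left hg_right).mono Set.Icc_subset_Ici_self
  have huc := (isCompact_Icc : IsCompact (Set.Icc (0:ℝ) R)).uniformContinuousOn_of_continuous hgc
  rw [Metric.uniformContinuousOn_iff] at huc
  obtain ⟨δ₁, hδ₁, hδ₁'⟩ := huc (η/2) (by positivity)
  set δ : ℝ := min (min δ₁ (η/4)) 1 with hδdef
  have hδpos : 0 < δ := lt_min (lt_min hδ₁ (by positivity)) one_pos
  have hδδ₁ : δ ≤ δ₁ := le_trans (min_le_left _ _) (min_le_left _ _)
  have hδη : δ ≤ η/4 := le_trans (min_le_left _ _) (min_le_right _ _)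
  have hδ1 : δ ≤ 1 := min_le_right _ _
  obtain ⟨ε₀, hε₀, hA⟩ := hA4 K' hK' δ hδpos
  refine ⟨ε₀, hε₀, ?_⟩
  intro ε hε hεlt u hu x hx y hy
  simp only [hL0]
  set a : H := Hmul (Hinv u) x with ha
  set b : H := Hmul (Hinv u) y with hb
  have haK : Hinv a ∈ K' := Or.inl ⟨(u, x), Set.mk_mem_prod hu hx, rfl⟩
  have hbK : b ∈ K' := Or.inr ⟨(u, y), Set.mk_mem_prod hu hy, rfl⟩
  set W : H := bdil k g ε⁻¹ (Hmul (bdil k g ε (Hinv a)) (bdil k g ε b)) with hWdef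
  have hdist : ‖W - β (Hinv a) b‖ < δ := hA ε hε hεlt _ haK _ hbK
  -- key algebraic identity
  have key : (1 / ε) * rho0 g (Hmul (Hinv (Hmul u (bdil k g ε a)))
      (Hmul u (bdil k g ε b))) = rho0 g W := by
    rw [Hmul_cancel, Hinv_bdil]
    rw [show Hmul (bdil k g ε (Hinv a)) (bdil k g ε b) = bdil k g ε W by
      rw [hWdef]
      exact (bdil_bdil_inv hk0 hk_mono hk_nonneg hg_left hg_right hε _).symm]
    rw [rho0_bdil hk0 hk_nonneg hg_left hg_right hε.le, one_div,
      inv_mul_cancel_left₀ hε.ne']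
  rw [key]
  set zb : H := β (Hinv a) b with hzb
  have hzC : ‖zb‖ ≤ C := hβ _ haK _ hbK
  have hWn : ‖W‖ ≤ R := by
    have h1 : ‖W‖ ≤ ‖zb‖ + ‖W - zb‖ := by
      have := norm_add_le zb (W - zb)
      simpa using this
    rw [hR]; linarith [hdist, hδ1, hzC]
  have h21 : |W.2 - zb.2| ≤ ‖W - zb‖ := by
    simpa [Prod.snd_sub, Real.norm_eq_abs] using norm_snd_le (W - zb)
  have h11 : |W.1.1 - zb.1.1| ≤ ‖W - zb‖ := by
    simpa [Prod.fst_sub, Real.norm_eq_abs] using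
      le_trans (norm_fst_le (W - zb).1) (norm_fst_le (W - zb))
  have h12 : |W.1.2 - zb.1.2| ≤ ‖W - zb‖ := by
    simpa [Prod.fst_sub, Real.norm_eq_abs] using
      le_trans (norm_snd_le (W - zb).1) (norm_fst_le (W - zb))
  have branch1 : |enorm2 W.1 - enorm2 zb.1| < η := by
    have := enorm2_sub_le W.1 zb.1
    have h4 : |W.1.1 - zb.1.1| + |W.1.2 - zb.1.2| < 2 * δ := by
      linarith [h11, h12, hdist]
    linarith [hδη]
  have branch2 : abs (g (abs W.2) - g (abs zb.2)) < η/2 := by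
    have hmemW : |W.2| ∈ Set.Icc (0:ℝ) R :=
      ⟨abs_nonneg _, le_trans (by simpa [Real.norm_eq_abs] using norm_snd_le W) hWn⟩
    have hmemz : |zb.2| ∈ Set.Icc (0:ℝ) R := by
      refine ⟨abs_nonneg _, le_trans (by simpa [Real.norm_eq_abs] using norm_snd_le zb) ?_⟩
      rw [hR]; linarith
    have hd : dist |W.2| |zb.2| < δ₁ := by
      rw [Real.dist_eq]
      calc abs (abs W.2 - abs zb.2) ≤ |W.2 - zb.2| := abs_abs_sub_abs_le_abs_sub _ _
      _ ≤ ‖W - zb‖ := h21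
      _ < δ := hdist
      _ ≤ δ₁ := hδδ₁
    have := hδ₁' _ hmemW _ hmemz hd
    rwa [Real.dist_eq] at this
  have hfinal : |rho0 g W - rho0 g zb| ≤
      max (abs (enorm2 W.1 - enorm2 zb.1)) (abs (g (abs W.2) - g (abs zb.2))) := by
    unfold rho0
    exact abs_max_sub_max_le_max _ _ _ _
  calc |rho0 g W - rho0 g zb| ≤ _ := hfinal
  _ < η := max_lt branch1 (by linarith [branch2])
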